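/- Let A and B be symmetric sequences of length n with entries in {±1}. If PSD_A(s) + PSD_B(s) > 4n for some integer s, then there do not exist sequences C, D such that A, B, C, D form a Williamson sequence. -/

import Mathlib

/-- The periodic autocorrelation function of the length-`n` sequence `a`. -/
def paf (n : ℕ) (a : ℕ → ℤ) (s : ℕ) : ℤ :=
  ∑ k ∈ Finset.range n, a k * a ((k + s) % n)

/-- `a` is a symmetric sequence of length `n`: `aᵢ = a_{n-i}` for `1 ≤ i < n`. -/
def SymmSeq (n : ℕ) (a : ℕ → ℤ) : Prop := ∀ i, 1 ≤ i → i < n → a i = a (n - i)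

/-- All entries of the length-`n` sequence `a` are `±1`. -/
def PMOne (n : ℕ) (a : ℕ → ℤ) : Prop := ∀ i < n, a i = 1 ∨ a i = -1

/-- `a,b,c,d` are Williamson sequences of order `n`. -/
def IsWilliamson (n : ℕ) (a b c d : ℕ → ℤ) : Prop :=
  SymmSeq n a ∧ SymmSeq n b ∧ SymmSeq n c ∧ SymmSeq n d ∧
  PMOne n a ∧ PMOne n b ∧ PMOne n c ∧ PMOne n d ∧
  ∀ s, 1 ≤ s → s ≤ n / 2 → paf n a s + paf n b s + paf n c s + paf n d s = 0

/-- The discrete Fourier transform of the length-`n` sequence `a`. -/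
noncomputable def dft (n : ℕ) (a : ℕ → ℤ) (s : ℤ) : ℂ :=
  ∑ k ∈ Finset.range n, (a k : ℂ) * Complex.exp (2 * Real.pi * Complex.I * k * s / n)

/-- The power spectral density of the length-`n` sequence `a`. -/
noncomputable def psd (n : ℕ) (a : ℕ → ℤ) (s : ℤ) : ℝ :=
  ‖dft n a s‖ ^ 2

lemma modH1 {n : ℕ} (j a : ℕ) (hj : j < n) (ha : a < n) :
    (j + (a + (n - j)) % n) % n = a := by
  rw [Nat.add_mod_mod, show j + (a + (n - j)) = a + n by omega,
    Nat.add_mod_right, Nat.mod_eq_of_lt ha]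

lemma modH2 {n : ℕ} (j t : ℕ) (hj : j < n) (ht : t < n) :
    ((j + t) % n + (n - j)) % n = t := by
  rw [Nat.mod_add_mod, show j + t + (n - j) = t + n by omega,
    Nat.add_mod_right, Nat.mod_eq_of_lt ht]

/-- Summing `F` over `range n` is the same as summing `F ((j + ·) % n)`. -/
lemma sum_shift {M : Type*} [AddCommMonoid M] {n j : ℕ} (hj : j < n) (F : ℕ → M) :
    ∑ k ∈ Finset.range n, F k = ∑ t ∈ Finset.range n, F ((j + t) % n) := by
  have hn : 0 < n := lt_of_le_of_lt (Nat.zero_le _) hj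
  refine Finset.sum_nbij' (i := fun k => (k + (n - j)) % n) (j := fun t => (j + t) % n)
    (fun x hx => Finset.mem_range.mpr (Nat.mod_lt _ hn))
    (fun x hx => Finset.mem_range.mpr (Nat.mod_lt _ hn))
    (fun x hx => ?_) (fun x hx => ?_) (fun x hx => ?_)
  · exact modH1 j x hj (Finset.mem_range.mp hx)
  · exact modH2 j x hj (Finset.mem_range.mp hx)
  · rw [modH1 j x hj (Finset.mem_range.mp hx)]

lemma zpow_emod {n : ℕ} (hn : 0 < n) {z : ℂ} (hz : z ^ n = 1) (m : ℤ) :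
    z ^ m = z ^ (m % (n : ℤ)) := by
  have hz0 : z ≠ 0 := by
    intro h; rw [h, zero_pow hn.ne'] at hz; exact one_ne_zero hz.symm
  conv_lhs => rw [← Int.mul_ediv_add_emod m n]
  rw [zpow_add₀ hz0, zpow_mul, zpow_natCast, hz, one_zpow, one_mul]

lemma zpow_congr {n : ℕ} (hn : 0 < n) {z : ℂ} (hz : z ^ n = 1) {m m' : ℤ}
    (h : m % (n : ℤ) = m' % (n : ℤ)) : z ^ m = z ^ m' := by
  rw [zpow_emod hn hz m, zpow_emod hn hz m', h]

lemma exp_cong (n k t : ℕ) :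
    ((((k + t) % n : ℕ) : ℤ) + -(k : ℤ)) % (n : ℤ) = ((t : ℕ) : ℤ) % (n : ℤ) := by
  rw [← sub_eq_add_neg, Int.natCast_mod]
  push_cast
  rw [Int.sub_emod, Int.emod_emod_of_dvd _ dvd_rfl, ← Int.sub_emod, add_sub_cancel_left]

/-- The PSD is the (inverse) Fourier transform of the PAF. -/
lemma psd_eq_sum_paf {n : ℕ} (hn : 0 < n) (a : ℕ → ℤ) (s : ℤ) :
    (psd n a s : ℂ) = ∑ t ∈ Finset.range n,
      (paf n a t : ℂ) * Complex.exp (2 * Real.pi * Complex.I * s / n) ^ t := by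
  set z : ℂ := Complex.exp (2 * Real.pi * Complex.I * s / n) with hzdef
  have hn0 : (n : ℂ) ≠ 0 := Nat.cast_ne_zero.mpr hn.ne'
  have hz : z ^ n = 1 := by
    rw [hzdef, ← Complex.exp_nat_mul,
      show (n : ℂ) * (2 * Real.pi * Complex.I * s / n) = s * (2 * Real.pi * Complex.I) by
        field_simp]
    exact Complex.exp_int_mul_two_pi_mul_I s
  have hz0 : z ≠ 0 := Complex.exp_ne_zero _
  have hdft : dft n a s = ∑ k ∈ Finset.range n, (a k : ℂ) * z ^ (k : ℤ) := by
    refine Finset.sum_congr rfl fun k _ => ?_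
    rw [zpow_natCast, hzdef, ← Complex.exp_nat_mul]
    congr 1
    field_simp
  have hconj : (starRingEnd ℂ) z = z⁻¹ := by
    rw [hzdef, ← Complex.exp_conj, ← Complex.exp_neg]
    congr 1
    simp [map_div₀, map_mul, map_ofNat, Complex.conj_I]
    ring
  have hcdft : (starRingEnd ℂ) (dft n a s)
      = ∑ k ∈ Finset.range n, (a k : ℂ) * z ^ (-(k : ℤ)) := by
    rw [hdft, map_sum]
    refine Finset.sum_congr rfl fun k _ => ?_
    rw [map_mul, map_zpow₀, hconj, inv_zpow, ← zpow_neg]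
    simp
  have h1 : (psd n a s : ℂ) = dft n a s * (starRingEnd ℂ) (dft n a s) := by
    rw [Complex.mul_conj]
    unfold psd
    norm_cast
    rw [Complex.sq_norm]
  calc (psd n a s : ℂ)
      = ∑ k ∈ Finset.range n, ∑ j ∈ Finset.range n,
          ((a j : ℂ) * z ^ (j : ℤ)) * ((a k : ℂ) * z ^ (-(k : ℤ))) := by
        rw [h1, hcdft, hdft, Finset.sum_mul_sum, Finset.sum_comm]
    _ = ∑ k ∈ Finset.range n, ∑ t ∈ Finset.range n,
          ((a k : ℂ) * (a ((k + t) % n) : ℂ)) * z ^ t := by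
        refine Finset.sum_congr rfl fun k hk => ?_
        rw [sum_shift (Finset.mem_range.mp hk)
          (F := fun j => ((a j : ℂ) * z ^ (j : ℤ)) * ((a k : ℂ) * z ^ (-(k : ℤ))))]
        refine Finset.sum_congr rfl fun t ht => ?_
        have he : z ^ ((((k + t) % n : ℕ)) : ℤ) * z ^ (-(k : ℤ)) = z ^ t := by
          rw [← zpow_add₀ hz0, ← zpow_natCast z t]
          exact zpow_congr hn hz (exp_cong n k t)
        calc ((a ((k + t) % n) : ℂ) * z ^ ((((k + t) % n : ℕ)) : ℤ)) *
              ((a k : ℂ) * z ^ (-(k : ℤ)))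
            = ((a k : ℂ) * (a ((k + t) % n) : ℂ)) *
              (z ^ ((((k + t) % n : ℕ)) : ℤ) * z ^ (-(k : ℤ))) := by ring
          _ = ((a k : ℂ) * (a ((k + t) % n) : ℂ)) * z ^ t := by rw [he]
    _ = ∑ t ∈ Finset.range n, (paf n a t : ℂ) * z ^ t := by
        rw [Finset.sum_comm]
        refine Finset.sum_congr rfl fun t _ => ?_
        rw [← Finset.sum_mul]
        congr 1
        unfold paf
        push_cast
        rfl

/-- The PAF at shift `0` of a `±1` sequence is `n`. -/
lemma paf_zero {n : ℕ} (x : ℕ → ℤ) (hp : PMOne n x) : paf n x 0 = n := by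
  unfold paf
  rw [Finset.sum_congr rfl (fun k hk => ?_), Finset.sum_const, Finset.card_range,
    nsmul_eq_mul, mul_one]
  have hk' := Finset.mem_range.mp hk
  rw [Nat.add_zero, Nat.mod_eq_of_lt hk']
  rcases hp k hk' with h | h <;> rw [h] <;> norm_num

/-- The PAF is symmetric: `PAF(n - t) = PAF(t)`. -/
lemma paf_symm {n : ℕ} (x : ℕ → ℤ) {t : ℕ} (ht : t < n) :
    paf n x (n - t) = paf n x t := by
  unfold paf
  rw [sum_shift ht (F := fun k => x k * x ((k + (n - t)) % n))]
  refine Finset.sum_congr rfl fun k hk => ?_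
  rw [modH2 t k ht (Finset.mem_range.mp hk), Nat.add_comm t k, mul_comm]

theorem psd_test_two (n : ℕ) (a b : ℕ → ℤ)
    (hsa : SymmSeq n a) (hsb : SymmSeq n b) (hpa : PMOne n a) (hpb : PMOne n b)
    (s : ℤ) (hs : psd n a s + psd n b s > 4 * n) :
    ¬ ∃ c d : ℕ → ℤ, IsWilliamson n a b c d := by
  rintro ⟨c, d, _, _, _, _, _, _, hpc, hpd, hpaf⟩
  rcases Nat.eq_zero_or_pos n with hn | hn
  · subst hn
    simp [psd, dft] at hs
  have hzero : ∀ t, 1 ≤ t → t < n →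
      paf n a t + paf n b t + paf n c t + paf n d t = 0 := by
    intro t ht1 ht
    rcases le_or_gt t (n / 2) with h | h
    · exact hpaf t ht1 h
    · have h1 : 1 ≤ n - t := by omega
      have h2 : n - t ≤ n / 2 := by omega
      rw [← paf_symm a ht, ← paf_symm b ht, ← paf_symm c ht, ← paf_symm d ht]
      exact hpaf (n - t) h1 h2
  have hsum : ((psd n a s + psd n b s + psd n c s + psd n d s : ℝ) : ℂ)
      = ((4 * n : ℝ) : ℂ) := by
    push_cast
    rw [psd_eq_sum_paf hn a s, psd_eq_sum_paf hn b s, psd_eq_sum_paf hn c s,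
      psd_eq_sum_paf hn d s, ← Finset.sum_add_distrib, ← Finset.sum_add_distrib,
      ← Finset.sum_add_distrib]
    rw [Finset.sum_congr rfl (fun t _ => show _ =
        ((paf n a t + paf n b t + paf n c t + paf n d t : ℤ) : ℂ) *
          Complex.exp (2 * Real.pi * Complex.I * s / n) ^ t by push_cast; ring)]
    rw [Finset.sum_eq_single_of_mem 0 (Finset.mem_range.mpr hn)]
    · rw [paf_zero a hpa, paf_zero b hpb, paf_zero c hpc, paf_zero d hpd]
      push_cast
      ring
    · intro t htmem htne
      rw [hzero t (Nat.one_le_iff_ne_zero.mpr htne) (Finset.mem_range.mp htmem)]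
      simp
  have hreal : psd n a s + psd n b s + psd n c s + psd n d s = 4 * n := by
    exact_mod_cast hsum
  have hc : 0 ≤ psd n c s := sq_nonneg _
  have hd : 0 ≤ psd n d s := sq_nonneg _
  linarith
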